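/- Let p be a prime number, let F and K be finite fields with |F| = p and |K| = p², and let ι : F → K be a ring homomorphism. Then the image of SL₂(F) in SL₂(K) under the group homomorphism induced by ι has index p³ + p. -/

import Mathlib

open Matrix

section aux

variable (E : Type*) [Field E] [Fintype E]

lemma sl2_equiv_ker :
    Nat.card (SpecialLinearGroup (Fin 2) E) =
      Nat.card (GeneralLinearGroup.det (n := Fin 2) (R := E)).ker := by
  classical
  refine Nat.card_congr ⟨fun g => ⟨SpecialLinearGroup.toGL g, SpecialLinearGroup.coeToGL_det g⟩,
    fun u => ⟨u.1.val, ?_⟩, fun g => Subtype.ext rfl, fun u => Subtype.ext (Units.ext rfl)⟩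
  have h : GeneralLinearGroup.det u.1 = 1 := u.2
  have := congrArg Units.val h
  simpa using this

lemma det_GL_surjective :
    Function.Surjective (GeneralLinearGroup.det (n := Fin 2) (R := E)) := by
  intro u
  have hd : Matrix.det (Matrix.diagonal ![(u : E), 1]) ≠ 0 := by
    simp [Matrix.det_diagonal, Fin.prod_univ_two]
  refine ⟨GeneralLinearGroup.mkOfDetNeZero _ hd, Units.ext ?_⟩
  simp [GeneralLinearGroup.mkOfDetNeZero, GeneralLinearGroup.mk',
    Matrix.unitOfDetInvertible, Matrix.det_diagonal, Fin.prod_univ_two]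

lemma card_SL2_field :
    Nat.card (SpecialLinearGroup (Fin 2) E) = Fintype.card E ^ 3 - Fintype.card E := by
  classical
  set q := Fintype.card E with hq
  have hq2 : 2 ≤ q := Fintype.one_lt_card
  have hGL : Nat.card (GL (Fin 2) E) = (q ^ 2 - 1) * (q ^ 2 - q) := by
    rw [Matrix.card_GL_field, Fin.prod_univ_two]
    norm_num
    simp only [hq, Fintype.card_eq_nat_card]
  have hker := Subgroup.card_mul_index (GeneralLinearGroup.det (n := Fin 2) (R := E)).ker
  rw [Subgroup.index_ker] at hker
  have hrange : Nat.card (GeneralLinearGroup.det (n := Fin 2) (R := E)).range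
      = Nat.card Eˣ := by
    rw [(MonoidHom.range_eq_top).2 (det_GL_surjective E)]
    exact Nat.card_congr Subgroup.topEquiv.toEquiv
  have hEu : Nat.card Eˣ = q - 1 := by
    rw [Nat.card_eq_fintype_card, Fintype.card_units, hq]
  rw [hrange, hEu, hGL, ← sl2_equiv_ker] at hker
  have hpos : 0 < q - 1 := by omega
  refine Nat.eq_of_mul_eq_mul_right hpos ?_
  rw [hker]
  have h1 : 1 ≤ q ^ 2 := Nat.one_le_two_pow.trans (Nat.pow_le_pow_left hq2 2)
  have h2 : q ≤ q ^ 2 := Nat.le_self_pow (by norm_num) _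
  have h3 : q ≤ q ^ 3 := Nat.le_self_pow (by norm_num) _
  have h4 : 1 ≤ q := by omega
  zify [h1, h2, h3, h4]
  ring

end aux

theorem index_range_SL2_inert (p : ℕ) (hp : p.Prime) (F K : Type*) [Field F] [Field K]
    [Fintype F] [Fintype K] (hF : Fintype.card F = p) (hK : Fintype.card K = p ^ 2)
    (ι : F →+* K) :
    (Matrix.SpecialLinearGroup.map (n := Fin 2) ι).range.index = p ^ 3 + p := by
  classical
  have hinj : Function.Injective (Matrix.SpecialLinearGroup.map (n := Fin 2) ι) := by
    intro a b hab
    have h1 : (a.val).map ι = (b.val).map ι := by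
      have := Subtype.ext_iff.1 hab
      simpa [Matrix.SpecialLinearGroup.map_apply_coe] using this
    ext i j
    exact ι.injective (congrFun (congrFun h1 i) j)
  have hcardrange : Nat.card (Matrix.SpecialLinearGroup.map (n := Fin 2) ι).range
      = Nat.card (Matrix.SpecialLinearGroup (Fin 2) F) := by
    exact (Nat.card_congr (MonoidHom.ofInjective hinj).toEquiv).symm
  have hmul := Subgroup.card_mul_index (Matrix.SpecialLinearGroup.map (n := Fin 2) ι).range
  rw [hcardrange, card_SL2_field F, card_SL2_field K, hF, hK] at hmul
  have hp2 : 2 ≤ p := hp.two_le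
  have hlt : p < p ^ 3 := by
    calc p = p ^ 1 := (pow_one p).symm
    _ < p ^ 3 := Nat.pow_lt_pow_right hp.one_lt (by norm_num)
  have hpos : 0 < p ^ 3 - p := by omega
  refine Nat.eq_of_mul_eq_mul_left hpos ?_
  rw [hmul]
  have h1 : p ≤ p ^ 3 := hlt.le
  have h2 : p ^ 2 ≤ (p ^ 2) ^ 3 := Nat.le_self_pow (by norm_num) _
  zify [h1, h2]
  ring
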